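/- Let 𝒞 be a cluster system on a nonempty finite set X, let FP be the fair proportion index on 𝒞, and let SV be the Shapley value. Then FP(ω) = SV(PD_ω) holds for all ω ∈ 𝕃(𝒞); equivalently, FP(ω) = SV(Σ_{C∈𝒞} ω(C)·g_C). -/

import Mathlib

open Finset

/-- The fair proportion index on a cluster system `𝒞` on `α`. -/
noncomputable def FPfun {α : Type*} [Fintype α] [DecidableEq α] (𝒞 : Finset (Finset α))
    (ω : ↥𝒞 → ℝ) (x : α) : ℝ :=
  ∑ C : ↥𝒞, if x ∈ C.1 then ω C / (C.1.card : ℝ) else 0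

/-- The game `g_C` associated with a nonempty subset `C ⊆ X`. -/
noncomputable def gC {α : Type*} [DecidableEq α] (C : Finset α) : Finset α → ℝ :=
  fun M => if (C ∩ M).Nonempty then 1 else 0

/-- The game `PD_ω` for a weighting `ω` of a cluster system `𝒞`:
`PD_ω(M) = ∑_{C ∈ 𝒞, M ∩ C ≠ ∅} ω(C)`. -/
noncomputable def PDgame {α : Type*} [DecidableEq α] (𝒞 : Finset (Finset α))
    (ω : ↥𝒞 → ℝ) (M : Finset α) : ℝ :=
  ∑ C : ↥𝒞, if (M ∩ C.1).Nonempty then ω C else 0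

/-- The Shapley value of a game `g : 𝒫(X) → ℝ`. -/
noncomputable def SV {α : Type*} [Fintype α] [DecidableEq α]
    (g : Finset α → ℝ) (x : α) : ℝ :=
  (1 / (Nat.factorial (Fintype.card α) : ℝ)) *
    ∑ M ∈ Finset.univ.filter (fun M : Finset α => x ∈ M),
      (Nat.factorial (M.card - 1) : ℝ) * (Nat.factorial (Fintype.card α - M.card) : ℝ) *
        (g M - g (M.erase x))

open Nat

lemma key_id (m c : ℕ) (hc : 0 < c) :
    ∑ k ∈ range (m+1), ((m.choose k : ℝ) * k ! * (m + c - 1 - k)!) = (m+c)! / c := by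
  set b : ℕ → ℝ := fun k => if k ≤ m then (m ! : ℝ) * (m + c - k)! / ((m - k)! * c) else 0 with hb
  have hterm : ∀ k ∈ range (m+1),
      ((m.choose k : ℝ) * k ! * (m + c - 1 - k)!) = b k - b (k+1) := by
    intro k hk
    rw [mem_range] at hk
    have hkm : k ≤ m := Nat.lt_succ_iff.mp hk
    have hch : (m.choose k : ℝ) * k ! = (m ! : ℝ) / (m - k)! := by
      have h2 : (m.choose k : ℝ) * k ! * ((m-k)! : ℝ) = (m ! : ℝ) := by
        exact_mod_cast Nat.choose_mul_factorial_mul_factorial hkm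
      have f : ((m-k)! : ℝ) ≠ 0 := by positivity
      rw [eq_div_iff f]; exact h2
    rcases eq_or_lt_of_le hkm with heq | hlt
    · subst heq
      simp only [hb, le_refl, if_pos, Nat.not_succ_le_self, if_neg, sub_zero,
        Nat.sub_self, Nat.factorial_zero, (by omega : ¬ (k + 1 ≤ k)), if_false]
      have h1 : k + c - k = c := by omega
      have h2 : k + c - 1 - k = c - 1 := by omega
      rw [h1, h2, Nat.choose_self]
      have : (c ! : ℝ) = c * (c-1)! := by
        exact_mod_cast (Nat.mul_factorial_pred hc.ne').symm
      rw [this]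
      have hc' : (c : ℝ) ≠ 0 := by positivity
      field_simp
      ring
    · have hk1 : k + 1 ≤ m := hlt
      simp only [hb, hkm, if_pos, hk1, if_pos]
      rw [hch]
      set j := m - (k+1) with hj
      have e1 : m + c - k = j + c + 1 := by omega
      have e2 : m + c - (k+1) = j + c := by omega
      have e3 : m - k = j + 1 := by omega
      have e4 : m + c - 1 - k = j + c := by omega
      rw [e1, e2, e3, e4, Nat.factorial_succ, Nat.factorial_succ]
      have hc' : (c : ℝ) ≠ 0 := by positivity
      have f1 : ((j)! : ℝ) ≠ 0 := by positivity
      have f2 : ((j+1 : ℕ) : ℝ) ≠ 0 := by positivity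
      push_cast
      field_simp
      ring
  rw [Finset.sum_congr rfl hterm, Finset.sum_range_sub' b]
  simp only [hb, Nat.zero_le, if_true, Nat.not_succ_le_self, if_false, sub_zero, Nat.sub_zero]
  have hm : (m ! : ℝ) ≠ 0 := by positivity
  have hc' : (c : ℝ) ≠ 0 := by positivity
  field_simp

lemma SV_gC {α : Type*} [Fintype α] [DecidableEq α] (C : Finset α) (hC : C.Nonempty) (x : α) :
    SV (gC C) x = if x ∈ C then 1 / (C.card : ℝ) else 0 := by
  by_cases hx : x ∈ C
  · rw [if_pos hx]
    unfold SV
    have hmarg : ∀ M ∈ Finset.univ.filter (fun M : Finset α => x ∈ M),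
        ((M.card - 1)! : ℝ) * ((Fintype.card α - M.card)! : ℝ) * (gC C M - gC C (M.erase x))
        = if C ∩ M = {x} then ((M.card - 1)! : ℝ) * ((Fintype.card α - M.card)! : ℝ) else 0 := by
      intro M hM
      rw [mem_filter] at hM
      have hxM : x ∈ C ∩ M := mem_inter.mpr ⟨hx, hM.2⟩
      have h1 : gC C M = 1 := if_pos ⟨x, hxM⟩
      have h2 : C ∩ M.erase x = (C ∩ M).erase x := by
        ext a; simp [mem_erase, mem_inter]; tauto
      by_cases hq : C ∩ M = {x}
      · have : gC C (M.erase x) = 0 := by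
          unfold gC
          rw [h2, hq]
          simp
        rw [if_pos hq, h1, this]; ring
      · have hne : ((C ∩ M).erase x).Nonempty := by
          obtain ⟨a, ha, hax⟩ : ∃ a ∈ C ∩ M, a ≠ x := by
            by_contra h
            push_neg at h
            exact hq (Finset.eq_singleton_iff_unique_mem.mpr ⟨hxM, fun b hb => h b hb⟩)
          exact ⟨a, mem_erase.mpr ⟨hax, ha⟩⟩
        have : gC C (M.erase x) = 1 := by unfold gC; rw [h2]; exact if_pos hne
        rw [if_neg hq, h1, this]; ring
    rw [Finset.sum_congr rfl hmarg, ← Finset.sum_filter, Finset.filter_filter]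
    set n := Fintype.card α with hn
    set c := C.card with hcC
    have hc : 0 < c := Finset.card_pos.mpr hC
    have hcn : c ≤ n := Finset.card_le_univ C
    set m := n - c with hm
    have hmc : m + c = n := by omega
    have hcard : (Finset.univ \ C).card = m := by
      rw [Finset.card_sdiff_of_subset (Finset.subset_univ C), Finset.card_univ]
    have hstep : ∑ M ∈ Finset.univ.filter (fun M : Finset α => x ∈ M ∧ C ∩ M = {x}),
        ((M.card - 1)! : ℝ) * ((n - M.card)! : ℝ)
        = ∑ S ∈ (Finset.univ \ C).powerset, ((S.card)! : ℝ) * ((n - (S.card + 1))! : ℝ) := by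
      apply Finset.sum_nbij' (i := fun M => M.erase x) (j := fun S => insert x S)
      · intro M hM
        rw [mem_filter] at hM
        rw [Finset.mem_powerset]
        intro a ha
        rw [mem_erase] at ha
        rw [Finset.mem_sdiff]
        refine ⟨Finset.mem_univ a, fun haC => ?_⟩
        have : a ∈ C ∩ M := mem_inter.mpr ⟨haC, ha.2⟩
        rw [hM.2.2] at this
        exact ha.1 (Finset.mem_singleton.mp this)
      · intro S hS
        rw [Finset.mem_powerset] at hS
        rw [mem_filter]
        refine ⟨Finset.mem_univ _, Finset.mem_insert_self x S, ?_⟩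
        ext a
        simp only [mem_inter, Finset.mem_insert, Finset.mem_singleton]
        constructor
        · rintro ⟨haC, (rfl | haS)⟩
          · rfl
          · exact absurd haC (Finset.mem_sdiff.mp (hS haS)).2
        · rintro rfl; exact ⟨hx, Or.inl rfl⟩
      · intro M hM
        rw [mem_filter] at hM
        exact Finset.insert_erase hM.2.1
      · intro S hS
        rw [Finset.mem_powerset] at hS
        apply Finset.erase_insert
        intro hxS
        exact (Finset.mem_sdiff.mp (hS hxS)).2 hx
      · intro M hM
        rw [mem_filter] at hM
        rw [Finset.card_erase_of_mem hM.2.1]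
        have h1 : 0 < M.card := Finset.card_pos.mpr ⟨x, hM.2.1⟩
        rw [show M.card - 1 + 1 = M.card by omega]
    rw [hstep, Finset.sum_powerset, hcard]
    have hinner : ∀ k ∈ range (m + 1),
        ∑ S ∈ (Finset.univ \ C).powersetCard k, ((S.card)! : ℝ) * ((n - (S.card + 1))! : ℝ)
        = (m.choose k : ℝ) * k ! * (m + c - 1 - k)! := by
      intro k hk
      rw [mem_range] at hk
      have : ∀ S ∈ (Finset.univ \ C).powersetCard k,
          ((S.card)! : ℝ) * ((n - (S.card + 1))! : ℝ) = (k ! : ℝ) * ((m + c - 1 - k)! : ℝ) := by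
        intro S hS
        rw [Finset.mem_powersetCard] at hS
        rw [hS.2, show n - (k + 1) = m + c - 1 - k by omega]
      rw [Finset.sum_congr rfl this, Finset.sum_const, Finset.card_powersetCard, hcard,
        nsmul_eq_mul]
      push_cast
      ring
    rw [Finset.sum_congr rfl hinner, key_id m c hc, hmc]
    have hn0 : ((n)! : ℝ) ≠ 0 := by positivity
    have hc0 : (c : ℝ) ≠ 0 := by positivity
    field_simp
  · rw [if_neg hx]
    unfold SV
    have : ∀ M ∈ Finset.univ.filter (fun M : Finset α => x ∈ M),
        ((M.card - 1)! : ℝ) * ((Fintype.card α - M.card)! : ℝ) * (gC C M - gC C (M.erase x)) = 0 := by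
      intro M _
      have : C ∩ M.erase x = C ∩ M := by
        ext a; simp only [mem_inter, mem_erase]
        constructor
        · rintro ⟨ha, _, hm⟩; exact ⟨ha, hm⟩
        · rintro ⟨ha, hm⟩; exact ⟨ha, fun h => hx (h ▸ ha), hm⟩
      unfold gC
      rw [this]; ring
    rw [Finset.sum_congr rfl this]
    simp

lemma SV_sum {α : Type*} [Fintype α] [DecidableEq α] {ι : Type*} (s : Finset ι)
    (f : ι → Finset α → ℝ) (x : α) :
    SV (fun M => ∑ i ∈ s, f i M) x = ∑ i ∈ s, SV (f i) x := by
  simp only [SV]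
  rw [← Finset.mul_sum]
  congr 1
  rw [Finset.sum_comm]
  refine Finset.sum_congr rfl fun M _ => ?_
  rw [← Finset.sum_sub_distrib, Finset.mul_sum]

lemma SV_smul {α : Type*} [Fintype α] [DecidableEq α] (a : ℝ) (g : Finset α → ℝ) (x : α) :
    SV (fun M => a * g M) x = a * SV g x := by
  simp only [SV]
  conv_rhs => rw [mul_left_comm]
  congr 1
  rw [Finset.mul_sum]
  refine Finset.sum_congr rfl fun M _ => ?_
  ring

/-- The fair proportion index coincides with the Shapley value of the game `PD_ω`;
equivalently, `FP(ω) = SV(∑_{C ∈ 𝒞} ω(C) · g_C)`. -/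
theorem stmt8 {α : Type*} [Fintype α] [DecidableEq α] [Nonempty α]
    (𝒞 : Finset (Finset α)) (h𝒞 : 𝒞.Nonempty) (h𝒞' : ∀ C ∈ 𝒞, C.Nonempty) :
    ∀ ω : ↥𝒞 → ℝ,
      FPfun 𝒞 ω = SV (PDgame 𝒞 ω)
      ∧ FPfun 𝒞 ω = SV (fun M => ∑ C : ↥𝒞, ω C * gC C.1 M) := by
  intro ω
  have hPD : PDgame 𝒞 ω = fun M => ∑ C : ↥𝒞, ω C * gC C.1 M := by
    funext M
    unfold PDgame gC
    refine Finset.sum_congr rfl fun C _ => ?_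
    rw [Finset.inter_comm]
    split_ifs <;> ring
  have hmain : FPfun 𝒞 ω = SV (fun M => ∑ C : ↥𝒞, ω C * gC C.1 M) := by
    funext x
    rw [show (fun M => ∑ C : ↥𝒞, ω C * gC C.1 M) = (fun M => ∑ C ∈ (Finset.univ : Finset ↥𝒞), (fun (C : ↥𝒞) (M : Finset α) => ω C * gC C.1 M) C M) from rfl,
      SV_sum]
    unfold FPfun
    refine Finset.sum_congr rfl fun C _ => ?_
    rw [SV_smul, SV_gC C.1 (h𝒞' C.1 C.2) x]
    split_ifs with h <;> ring
  exact ⟨by rw [hPD]; exact hmain, hmain⟩
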